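/- Let A : H → H be a symmetric (self-adjoint) invertible bounded linear operator on a Hilbert space H and T : H ⇒ H a maximal monotone set-valued map. Then the set-valued map A ∘ T ∘ A (i.e. x ↦ A(T(A x))) is maximal monotone. -/
import Mathlib


open Filter Topology Set
open scoped RealInnerProductSpace

variable {H : Type*} [NormedAddCommGroup H] [InnerProductSpace ℝ H] [CompleteSpace H]

/-- A set-valued operator `T : H ⇒ H` is monotone. -/
def MonotoneOp (T : H → Set H) : Prop :=
  ∀ x y u v, u ∈ T x → v ∈ T y → 0 ≤ ⟪u - v, x - y⟫

/-- A set-valued operator is maximal monotone: it is monotone and any pair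
monotonically related to its graph belongs to its graph. -/
def MaximalMonotoneOp (T : H → Set H) : Prop :=
  MonotoneOp T ∧ ∀ x u, (∀ y v, v ∈ T y → 0 ≤ ⟪u - v, x - y⟫) → u ∈ T x

/-- `J` is the resolvent `(I + r T)⁻¹` of `T`:
for every `u`, `r⁻¹ • (u - J u) ∈ T (J u)`. -/
def IsResolvent (T : H → Set H) (r : ℝ) (J : H → H) : Prop :=
  ∀ u, r⁻¹ • (u - J u) ∈ T (J u)

/-- Lemma 2.2: if `A` is a symmetric invertible bounded linear operator and `T`
is maximal monotone, then `A T A` is maximal monotone. -/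
theorem stmt_5 (T : H → Set H) (hT : MaximalMonotoneOp T)
    (A : H ≃L[ℝ] H) (hA : ∀ x y : H, ⟪A x, y⟫ = ⟪x, A y⟫) :
    MaximalMonotoneOp (fun x => (A : H → H) '' T (A x)) := by
  have key : ∀ (a b c : H), ⟪A a - A b, c⟫ = ⟪a - b, A c⟫ := by
    intro a b c
    rw [← map_sub, hA]
  constructor
  · rintro x y u v ⟨ξ, hξ, rfl⟩ ⟨η, hη, rfl⟩
    have := hT.1 (A x) (A y) ξ η hξ hη
    rwa [← map_sub A x y, ← hA, map_sub] at this
  · intro x u hu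
    refine ⟨A.symm u, ?_, by simp⟩
    apply hT.2
    intro z η hη
    have h := hu (A.symm z) (A η) ⟨η, by rw [A.apply_symm_apply]; exact hη, rfl⟩
    have : (⟪A (A.symm u) - A η, x - A.symm z⟫ : ℝ) = ⟪A.symm u - η, A x - z⟫ := by
      rw [key, map_sub]; simp
    rw [A.apply_symm_apply] at this
    rwa [this] at h
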